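/- arXiv:2309.04593 — 3 statements merged into one kernel-verified Lean document; each statement's English description precedes it below -/
import Mathlib

section
/- Let T : ℝ^N → ℝ^M be a linear map, and for each index r in a finite index set R let H_r : ℝ^N → Matrix (Fin 2) (Fin 2) ℝ be a linear map; write H(u) for the family (H_r u)_{r∈R} and suppose ker T ∩ (⋂_r ker H_r) = {0}. Let g : [0,∞) → [0,∞) be continuous with g(0) = 0, coercive (g(x) → ∞ as x → ∞), differentiable on (0,∞) with derivative g' positive and nonincreasing on (0,∞). Then for any m ∈ ℝ^M and any ρ > 0, the function f(u) = (1/2)‖T u − m‖² + ρ · Σ_{r∈R} [ g(σ₁(H_r u)) + g(σ₂(H_r u)) ] is coercive, i.e. f(u) → ∞ as ‖u‖ → ∞. -/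
open Filter

/-- Singular values of a real `n × n` matrix, in decreasing order:
the square roots of the eigenvalues of `Aᵀ * A`, sorted decreasingly
(so `singularValues A 0` is the largest). -/
noncomputable def singularValues {n : ℕ} (A : Matrix (Fin n) (Fin n) ℝ) : Fin n → ℝ :=
  fun i => Real.sqrt ((Matrix.isHermitian_conjTranspose_mul_self A).eigenvalues
      (Tuple.sort (Matrix.isHermitian_conjTranspose_mul_self A).eigenvalues i.rev))

lemma trace_eq_sum_eigenvalues {n : ℕ} {B : Matrix (Fin n) (Fin n) ℝ} (hB : B.IsHermitian) :
    B.trace = ∑ i, hB.eigenvalues i := by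
  simpa using hB.trace_eq_sum_eigenvalues

lemma singularValues_nonneg {n : ℕ} (A : Matrix (Fin n) (Fin n) ℝ) (i : Fin n) :
    0 ≤ singularValues A i := Real.sqrt_nonneg _

lemma abs_entry_le_sv (A : Matrix (Fin 2) (Fin 2) ℝ) (i j : Fin 2) :
    |A i j| ≤ Real.sqrt 2 * singularValues A 0 := by
  have hA := Matrix.isHermitian_conjTranspose_mul_self A
  set μ : Fin 2 → ℝ := hA.eigenvalues with hμ
  have hnn : ∀ k, 0 ≤ μ k := fun k => Matrix.eigenvalues_conjTranspose_mul_self_nonneg A k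
  have htr : ((Matrix.conjTranspose A) * A).trace = ∑ k, μ k := trace_eq_sum_eigenvalues hA
  have htr2 : ((Matrix.conjTranspose A) * A).trace = ∑ p : Fin 2, ∑ q : Fin 2, A q p * A q p := by
    simp [Matrix.trace, Matrix.mul_apply, Matrix.diag, Matrix.conjTranspose_apply]
  have hsq : A i j * A i j ≤ ∑ k, μ k := by
    rw [← htr, htr2]
    calc A i j * A i j ≤ ∑ q : Fin 2, A q j * A q j := by
          have := Finset.single_le_sum (f := fun q => A q j * A q j)
            (fun q _ => mul_self_nonneg _) (Finset.mem_univ i)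
          simpa using this
      _ ≤ ∑ p : Fin 2, ∑ q : Fin 2, A q p * A q p := by
          exact Finset.single_le_sum (f := fun p => ∑ q : Fin 2, A q p * A q p)
            (fun p _ => Finset.sum_nonneg fun q _ => mul_self_nonneg _) (Finset.mem_univ j)
  set σ := Tuple.sort μ with hσ
  have hmono : μ (σ 0) ≤ μ (σ 1) := Tuple.monotone_sort μ (by norm_num : (0:Fin 2) ≤ 1)
  have hperm : ∑ k, μ (σ k) = ∑ k, μ k := Equiv.sum_comp σ μ
  have hsum2 : μ (σ 0) + μ (σ 1) = ∑ k, μ k := by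
    rw [← hperm, Fin.sum_univ_two]
  have hbig : A i j * A i j ≤ 2 * μ (σ 1) := by nlinarith
  have hrev : (0 : Fin 2).rev = 1 := rfl
  have hsv : singularValues A 0 = Real.sqrt (μ (σ 1)) := by
    rw [singularValues, hrev]
  rw [hsv, ← Real.sqrt_mul (by norm_num : (0:ℝ) ≤ 2)]
  calc |A i j| = Real.sqrt (A i j * A i j) := by
        rw [← Real.sqrt_mul_self (abs_nonneg _), abs_mul_abs_self]
    _ ≤ Real.sqrt (2 * μ (σ 1)) := Real.sqrt_le_sqrt hbig

/-- coercivity of the QSHS-regularized restoration cost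
`f(u) = ½‖Tu − m‖² + ρ Σ_r [g(σ₁(H_r u)) + g(σ₂(H_r u))]`
when `ker T ∩ (⋂ r, ker H_r) = {0}` and `g` is a continuous, coercive penalty on `[0,∞)`
vanishing at `0`, differentiable on `(0,∞)` with positive nonincreasing derivative. -/
theorem restoration_cost_coercive
    {N M : ℕ} {R : Type*} [Fintype R]
    (T : EuclideanSpace ℝ (Fin N) →ₗ[ℝ] EuclideanSpace ℝ (Fin M))
    (H : R → (EuclideanSpace ℝ (Fin N) →ₗ[ℝ] Matrix (Fin 2) (Fin 2) ℝ))
    (hker : LinearMap.ker T ⊓ (⨅ r : R, LinearMap.ker (H r)) = ⊥)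
    (g g' : ℝ → ℝ)
    (hg0 : g 0 = 0)
    (hgcont : ContinuousOn g (Set.Ici 0))
    (hgnonneg : ∀ x ∈ Set.Ici (0 : ℝ), 0 ≤ g x)
    (hgcoercive : Tendsto g atTop atTop)
    (hgderiv : ∀ x ∈ Set.Ioi (0 : ℝ), HasDerivAt g (g' x) x)
    (hg'pos : ∀ x ∈ Set.Ioi (0 : ℝ), 0 < g' x)
    (hg'anti : AntitoneOn g' (Set.Ioi 0))
    (m : EuclideanSpace ℝ (Fin M)) (ρ : ℝ) (hρ : 0 < ρ) :
    Tendsto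
      (fun u : EuclideanSpace ℝ (Fin N) =>
        (1 / 2) * ‖T u - m‖ ^ 2 +
          ρ * ∑ r : R, (g (singularValues (H r u) 0) + g (singularValues (H r u) 1)))
      (comap (fun u : EuclideanSpace ℝ (Fin N) => ‖u‖) atTop) atTop := by
  classical
  -- entry extraction as a linear map
  let E : Fin 2 → Fin 2 → (Matrix (Fin 2) (Fin 2) ℝ →ₗ[ℝ] ℝ) := fun i j =>
    { toFun := fun A => A i j, map_add' := fun _ _ => rfl, map_smul' := fun _ _ => rfl }
  let L : EuclideanSpace ℝ (Fin N) →ₗ[ℝ]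
      (EuclideanSpace ℝ (Fin M) × ((R × Fin 2 × Fin 2) → ℝ)) :=
    T.prod (LinearMap.pi fun k => (E k.2.1 k.2.2).comp (H k.1))
  have hLker : LinearMap.ker L = ⊥ := by
    rw [LinearMap.ker_eq_bot']
    intro u hu
    have h1 : T u = 0 := congrArg Prod.fst hu
    have h2 : ∀ r, H r u = 0 := by
      intro r; ext i j
      have := congrFun (congrArg Prod.snd hu) (r, i, j)
      exact this
    have hmem : u ∈ LinearMap.ker T ⊓ ⨅ r : R, LinearMap.ker (H r) :=
      Submodule.mem_inf.mpr ⟨h1, (Submodule.mem_iInf _).mpr fun r => h2 r⟩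
    rw [hker] at hmem
    simpa using hmem
  obtain ⟨K, hKpos, hK⟩ := L.exists_antilipschitzWith hLker
  have hKR : (0:ℝ) < (K : ℝ) := hKpos
  set c : ℝ := (K : ℝ)⁻¹ with hc
  have hcpos : 0 < c := inv_pos.mpr hKR
  have hL : ∀ u, c * ‖u‖ ≤ ‖L u‖ := by
    intro u
    have h := hK.le_mul_dist u 0
    rw [dist_zero_right, map_zero, dist_zero_right] at h
    rw [hc, inv_mul_le_iff₀ hKR]
    exact h
  -- nonnegativity of the regularizer
  have hreg : ∀ u : EuclideanSpace ℝ (Fin N),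
      0 ≤ ∑ r : R, (g (singularValues (H r u) 0) + g (singularValues (H r u) 1)) := by
    intro u
    refine Finset.sum_nonneg fun r _ => add_nonneg ?_ ?_ <;>
      exact hgnonneg _ (singularValues_nonneg _ _)
  rw [tendsto_atTop]
  intro b
  obtain ⟨X₁, hX₁⟩ := eventually_atTop.mp (hgcoercive.eventually_ge_atTop (b / ρ))
  set B : ℝ := max b 0 with hB
  set A : ℝ := max (max ((‖m‖ + Real.sqrt (2 * B)) / c) ((2 * Real.sqrt 2 * max X₁ 0) / c)) 1
    with hA
  have hA1 : (1:ℝ) ≤ A := le_max_right _ _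
  rw [Filter.eventually_comap]
  filter_upwards [eventually_ge_atTop A] with t ht u hu
  have hAu : A ≤ ‖u‖ := by rw [hu]; exact ht
  have hu1 : (1:ℝ) ≤ ‖u‖ := le_trans hA1 hAu
  have hupos : (0:ℝ) < ‖u‖ := lt_of_lt_of_le one_pos hu1
  -- the two cases
  have hmax : c * ‖u‖ ≤ max ‖T u‖ ‖(fun k : R × Fin 2 × Fin 2 => H k.1 u k.2.1 k.2.2)‖ := by
    have := hL u
    rwa [Prod.norm_def] at this
  rcases le_max_iff.mp hmax with hcase | hcase
  · -- data-fidelity term dominates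
    have h1 : ‖m‖ + Real.sqrt (2 * B) ≤ c * ‖u‖ := by
      have : (‖m‖ + Real.sqrt (2 * B)) / c ≤ A := le_trans (le_max_left _ _) (le_max_left _ _)
      calc ‖m‖ + Real.sqrt (2 * B) = ((‖m‖ + Real.sqrt (2 * B)) / c) * c := by
            field_simp
        _ ≤ A * c := by gcongr
        _ ≤ ‖u‖ * c := by gcongr
        _ = c * ‖u‖ := mul_comm _ _
    have h2 : Real.sqrt (2 * B) ≤ ‖T u - m‖ := by
      have h3 : ‖T u‖ - ‖m‖ ≤ ‖T u - m‖ := norm_sub_norm_le _ _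
      linarith [le_trans h1 hcase]
    have h4 : 2 * B ≤ ‖T u - m‖ ^ 2 := by
      have := pow_le_pow_left₀ (Real.sqrt_nonneg _) h2 2
      rwa [Real.sq_sqrt (by positivity)] at this
    have h5 : b ≤ (1/2) * ‖T u - m‖ ^ 2 := by
      have : b ≤ B := le_max_left _ _
      linarith
    have h6 : 0 ≤ ρ * ∑ r : R, (g (singularValues (H r u) 0) + g (singularValues (H r u) 1)) :=
      mul_nonneg hρ.le (hreg u)
    linarith
  · -- regularizer dominates: find a big entry
    obtain ⟨k, hk⟩ : ∃ k : R × Fin 2 × Fin 2, c * ‖u‖ / 2 ≤ |H k.1 u k.2.1 k.2.2| := by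
      by_contra h
      push_neg at h
      have hle : ‖(fun k : R × Fin 2 × Fin 2 => H k.1 u k.2.1 k.2.2)‖ ≤ c * ‖u‖ / 2 := by
        apply pi_norm_le_iff_of_nonneg (by positivity) |>.mpr
        intro k
        rw [Real.norm_eq_abs]
        exact (h k).le
      have : c * ‖u‖ ≤ c * ‖u‖ / 2 := le_trans hcase hle
      nlinarith [mul_pos hcpos hupos]
    obtain ⟨r, i, j⟩ := k
    have hsv : c * ‖u‖ / (2 * Real.sqrt 2) ≤ singularValues (H r u) 0 := by
      have h7 : |H r u i j| ≤ Real.sqrt 2 * singularValues (H r u) 0 := abs_entry_le_sv _ i j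
      have hs2 : (0:ℝ) < Real.sqrt 2 := Real.sqrt_pos.mpr (by norm_num)
      rw [div_le_iff₀ (by positivity)]
      calc c * ‖u‖ = (c * ‖u‖ / 2) * 2 := by ring
        _ ≤ (Real.sqrt 2 * singularValues (H r u) 0) * 2 := by
            have := le_trans hk h7
            gcongr
        _ = singularValues (H r u) 0 * (2 * Real.sqrt 2) := by ring
    have hX : X₁ ≤ singularValues (H r u) 0 := by
      have hs2 : (0:ℝ) < Real.sqrt 2 := Real.sqrt_pos.mpr (by norm_num)
      have hAle : (2 * Real.sqrt 2 * max X₁ 0) / c ≤ ‖u‖ :=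
        le_trans (le_trans (le_max_right _ _) (le_max_left _ _)) hAu
      have : max X₁ 0 ≤ c * ‖u‖ / (2 * Real.sqrt 2) := by
        rw [le_div_iff₀ (by positivity)]
        calc max X₁ 0 * (2 * Real.sqrt 2) = ((2 * Real.sqrt 2 * max X₁ 0) / c) * c := by
              field_simp
          _ ≤ ‖u‖ * c := by gcongr
          _ = c * ‖u‖ := mul_comm _ _
      exact le_trans (le_trans (le_max_left _ _) this) hsv
    have hgb : b / ρ ≤ g (singularValues (H r u) 0) := hX₁ _ hX
    have hterm : b / ρ ≤ ∑ r : R, (g (singularValues (H r u) 0) + g (singularValues (H r u) 1)) := by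
      calc b / ρ ≤ g (singularValues (H r u) 0) + g (singularValues (H r u) 1) := by
            have := hgnonneg _ (singularValues_nonneg (H r u) 1)
            linarith
        _ ≤ _ := Finset.single_le_sum
            (f := fun r => g (singularValues (H r u) 0) + g (singularValues (H r u) 1))
            (fun r _ => add_nonneg (hgnonneg _ (singularValues_nonneg _ _))
              (hgnonneg _ (singularValues_nonneg _ _))) (Finset.mem_univ r)
    have h8 : b ≤ ρ * ∑ r : R, (g (singularValues (H r u) 0) + g (singularValues (H r u) 1)) := by
      rw [← div_le_iff₀' hρ] at *
      exact hterm
    have h9 : 0 ≤ (1/2) * ‖T u - m‖ ^ 2 := by positivity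
    linarith
end

section
/- Fix q ∈ (0,1) and ρ > 0, and define s : [0,∞) → ℝ by s(0) = 0 and s(x) = max{ x − ρ^{2−q} x^{1−q}, 0 } for x > 0, and set λ := ρ^{(2−q)/q}. Then: (i) s is continuous on [0,∞); (ii) s(x) = 0 for all x ∈ [0, λ]; (iii) s is strictly increasing on [λ, ∞); and (iv) s(x) ≤ x for all x ≥ 0. -/
/-- the `q`-shrinkage operation `s(x) = max{x − ρ^{2−q} x^{1−q}, 0}` (for `x > 0`,
with `s(0) = 0`) satisfies the threshold conditions with `λ = ρ^{(2−q)/q}`: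
it is continuous on `[0,∞)`, vanishes on `[0,λ]`, is strictly increasing on `[λ,∞)`,
and is dominated by the identity. -/
theorem q_shrinkage_threshold_properties
    (q ρ : ℝ) (hq : q ∈ Set.Ioo (0 : ℝ) 1) (hρ : 0 < ρ)
    (s : ℝ → ℝ) (hs0 : s 0 = 0)
    (hs : ∀ x : ℝ, 0 < x → s x = max (x - ρ ^ (2 - q) * x ^ (1 - q)) 0)
    (lam : ℝ) (hlam : lam = ρ ^ ((2 - q) / q)) :
    ContinuousOn s (Set.Ici 0) ∧
    (∀ x ∈ Set.Icc (0 : ℝ) lam, s x = 0) ∧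
    StrictMonoOn s (Set.Ici lam) ∧
    (∀ x : ℝ, 0 ≤ x → s x ≤ x) := by
  obtain ⟨hq0, hq1⟩ := hq
  set C : ℝ := ρ ^ (2 - q) with hC
  have hC0 : 0 < C := Real.rpow_pos_of_pos hρ _
  have hlam0 : 0 < lam := by rw [hlam]; exact Real.rpow_pos_of_pos hρ _
  have hlamq : lam ^ q = C := by
    rw [hlam, ← Real.rpow_mul hρ.le, div_mul_cancel₀ _ (ne_of_gt hq0)]
  -- key factorization: x = x^(1-q) * x^q for x > 0
  have hfact : ∀ x : ℝ, 0 < x → x - C * x ^ (1 - q) = x ^ (1 - q) * (x ^ q - C) := by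
    intro x hx
    have : x ^ (1 - q) * x ^ q = x := by
      rw [← Real.rpow_add hx]; norm_num
    ring_nf
    nlinarith [this]
  -- the global formula
  set g : ℝ → ℝ := fun x => max (x - C * x ^ (1 - q)) 0 with hg
  have hzero : (0:ℝ) ^ (1 - q) = 0 := Real.zero_rpow (by linarith)
  have hEq : Set.EqOn s g (Set.Ici 0) := by
    intro x hx
    rcases eq_or_lt_of_le (Set.mem_Ici.mp hx) with h | h
    · simp [g, ← h, hs0, hzero]
    · exact hs x h
  have hrpc : Continuous fun x : ℝ => x ^ (1 - q) :=
    continuous_iff_continuousAt.mpr fun x =>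
      Real.continuousAt_rpow_const x _ (Or.inr (by linarith))
  have hgcont : Continuous g :=
    ((continuous_id.sub (continuous_const.mul hrpc)).max continuous_const)
  refine ⟨(hgcont.continuousOn).congr hEq, ?_, ?_, ?_⟩
  · -- vanishing on [0, lam]
    intro x ⟨hx0, hxlam⟩
    rcases eq_or_lt_of_le hx0 with h | h
    · rw [← h]; exact hs0
    · rw [hs x h, max_eq_right]
      rw [hfact x h]
      apply mul_nonpos_of_nonneg_of_nonpos (Real.rpow_nonneg h.le _)
      have : x ^ q ≤ lam ^ q := Real.rpow_le_rpow h.le hxlam hq0.le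
      linarith [hlamq ▸ this]
  · -- strict mono on [lam, ∞)
    set f : ℝ → ℝ := fun x => x - C * x ^ (1 - q) with hf
    have hEqf : Set.EqOn f s (Set.Ici lam) := by
      intro x hx
      have hxpos : 0 < x := lt_of_lt_of_le hlam0 hx
      rw [hs x hxpos, max_eq_left]
      rw [hfact x hxpos]
      apply mul_nonneg (Real.rpow_nonneg hxpos.le _)
      have : lam ^ q ≤ x ^ q := Real.rpow_le_rpow hlam0.le hx hq0.le
      linarith [hlamq ▸ this]
    have hmono : StrictMonoOn f (Set.Ici lam) := by
      apply strictMonoOn_of_deriv_pos (convex_Ici lam)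
      · exact (continuous_id.sub (continuous_const.mul hrpc)).continuousOn
      · intro x hx
        rw [interior_Ici] at hx
        have hxpos : 0 < x := lt_trans hlam0 hx
        have hd : HasDerivAt f (1 - C * ((1 - q) * x ^ (1 - q - 1))) x := by
          have h1 : HasDerivAt (fun y : ℝ => y ^ (1 - q)) ((1 - q) * x ^ (1 - q - 1)) x :=
            Real.hasDerivAt_rpow_const (Or.inl (ne_of_gt hxpos))
          exact (hasDerivAt_id' x).sub ((h1.const_mul C))
        rw [hd.deriv]
        have hexp : (1 : ℝ) - q - 1 = -q := by ring
        have hxq : lam ^ q < x ^ q := Real.rpow_lt_rpow hlam0.le hx hq0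
        have hxqpos : 0 < x ^ q := Real.rpow_pos_of_pos hxpos _
        have hneg : x ^ (1 - q - 1) = (x ^ q)⁻¹ := by
          rw [hexp, Real.rpow_neg hxpos.le]
        rw [hneg]
        have h1 : C * (x ^ q)⁻¹ < 1 := by
          rw [← hlamq]
          rw [mul_inv_lt_iff₀ hxqpos, one_mul]
          exact hxq
        have h2 : 0 < C * (x ^ q)⁻¹ := mul_pos hC0 (inv_pos.mpr hxqpos)
        nlinarith
    exact hmono.congr hEqf
  · -- dominated by identity
    intro x hx
    rcases eq_or_lt_of_le hx with h | h
    · rw [← h, hs0]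
    · rw [hs x h]
      apply max_le _ h.le
      have : 0 ≤ C * x ^ (1 - q) := mul_nonneg hC0.le (Real.rpow_nonneg h.le _)
      linarith
end

section
/- Fix q ∈ (0,1) and ρ > 0, and define S : ℝ → ℝ by S(x) = max{|x| − ρ^{2−q}|x|^{1−q}, 0}·sign(x) for x ≠ 0 and S(0) = 0. Let g : ℝ → ℝ be any even continuous function such that for every x ∈ ℝ, S(x) is a global minimizer over t ∈ ℝ of t ↦ ρ·g(t) + (1/2)(t − x)². Then g is coercive: g(t) → ∞ as |t| → ∞. -/
/-- coercivity of the `q`-shrinkage penalty for `q ∈ (0,1)`. If `g` is an even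
continuous function such that the `q`-shrinkage operation
`S(x) = max{|x| − ρ^{2−q}|x|^{1−q}, 0}·sign(x)` globally minimizes
`t ↦ ρ·g(t) + ½(t − x)²` for every `x`, then `g(t) → ∞ as |t| → ∞`. -/
theorem q_shrinkage_penalty_coercive
    (q ρ : ℝ) (hq : q ∈ Set.Ioo (0 : ℝ) 1) (hρ : 0 < ρ)
    (S : ℝ → ℝ) (hS0 : S 0 = 0)
    (hS : ∀ x : ℝ, x ≠ 0 →
      S x = max (|x| - ρ ^ (2 - q) * |x| ^ (1 - q)) 0 * Real.sign x)
    (g : ℝ → ℝ)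
    (hgeven : ∀ t : ℝ, g (-t) = g t)
    (hgcont : Continuous g)
    (hprox : ∀ x t : ℝ,
      ρ * g (S x) + (1 / 2) * (S x - x) ^ 2 ≤ ρ * g t + (1 / 2) * (t - x) ^ 2) :
    Filter.Tendsto g (Filter.cocompact ℝ) Filter.atTop := by
  obtain ⟨hq0, hq1⟩ := hq
  set τ : ℝ := ρ ^ ((2 - q) / q) with hτdef
  have hτpos : 0 < τ := Real.rpow_pos_of_pos hρ _
  -- lower bound on the compact set [0, τ]
  obtain ⟨s0, hs0, hmin⟩ :=
    (isCompact_Icc (a := (0:ℝ)) (b := τ)).exists_isMinOn ⟨0, le_refl 0, hτpos.le⟩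
      hgcont.continuousOn
  set m : ℝ := g s0 with hmdef
  have hm : ∀ s ∈ Set.Icc (0:ℝ) τ, m ≤ g s := fun s hs => hmin hs
  -- the key algebraic identity:  ρ^(2-q) * τ^(1-q) = τ
  have hτeq : ρ ^ (2 - q) * τ ^ (1 - q) = τ := by
    rw [hτdef, ← Real.rpow_mul hρ.le, ← Real.rpow_add hρ]
    congr 1
    field_simp
    ring
  -- descent inequality from the prox property at x = t
  have hdesc : ∀ t : ℝ, g (S t) + 1 / (2 * ρ) * (t - S t) ^ 2 ≤ g t := by
    intro t
    have h := hprox t t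
    have h2 : (t - t) ^ 2 = 0 := by ring
    have h3 : (S t - t) ^ 2 = (t - S t) ^ 2 := by ring
    rw [h2, h3] at h
    have h' : ρ * (g (S t) + 1 / (2 * ρ) * (t - S t) ^ 2) ≤ ρ * g t := by
      have heq : ρ * (g (S t) + 1 / (2 * ρ) * (t - S t) ^ 2)
          = ρ * g (S t) + 1 / 2 * (t - S t) ^ 2 := by
        field_simp
      rw [heq]; linarith
    exact le_of_mul_le_mul_left h' hρ
  -- properties of S on (τ, ∞)
  have hSprop : ∀ t : ℝ, τ < t → 0 ≤ S t ∧ S t ≤ t - τ := by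
    intro t ht
    have ht0 : 0 < t := lt_trans hτpos ht
    have htabs : |t| = t := abs_of_pos ht0
    have hsign : Real.sign t = 1 := Real.sign_of_pos ht0
    have hSt : S t = max (t - ρ ^ (2 - q) * t ^ (1 - q)) 0 := by
      rw [hS t (ne_of_gt ht0), htabs, hsign, mul_one]
    -- the gap ρ^(2-q) t^(1-q) exceeds τ
    have hgap : τ < ρ ^ (2 - q) * t ^ (1 - q) := by
      have h1 : τ ^ (1 - q) < t ^ (1 - q) :=
        Real.rpow_lt_rpow hτpos.le ht (by linarith)
      have h2 : (0:ℝ) < ρ ^ (2 - q) := Real.rpow_pos_of_pos hρ _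
      calc τ = ρ ^ (2 - q) * τ ^ (1 - q) := hτeq.symm
        _ < ρ ^ (2 - q) * t ^ (1 - q) := by
            exact mul_lt_mul_of_pos_left h1 h2
    constructor
    · rw [hSt]; exact le_max_right _ _
    · rw [hSt]
      apply max_le
      · linarith
      · linarith
  -- main induction
  have hmain : ∀ n : ℕ, ∀ t : ℝ, 0 ≤ t → t ≤ n * τ + τ →
      m + τ / (2 * ρ) * (t - τ) ≤ g t := by
    intro n
    induction n with
    | zero =>
        intro t ht0 htn
        simp only [Nat.cast_zero, zero_mul, zero_add] at htn
        have h1 : m ≤ g t := hm t ⟨ht0, htn⟩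
        have h2 : τ / (2 * ρ) * (t - τ) ≤ 0 :=
          mul_nonpos_of_nonneg_of_nonpos (by positivity) (by linarith)
        linarith
    | succ n ih =>
        intro t ht0 htn
        by_cases h : t ≤ τ
        · have h1 : m ≤ g t := hm t ⟨ht0, h⟩
          have h2 : τ / (2 * ρ) * (t - τ) ≤ 0 :=
            mul_nonpos_of_nonneg_of_nonpos (by positivity) (by linarith)
          linarith
        · push_neg at h
          obtain ⟨hS1, hS2⟩ := hSprop t h
          have hd := hdesc t
          have ihS : m + τ / (2 * ρ) * (S t - τ) ≤ g (S t) := by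
            apply ih (S t) hS1
            push_cast at htn ⊢
            linarith
          have hgap : τ ≤ t - S t := by linarith
          have hsq : τ * (t - S t) ≤ (t - S t) ^ 2 := by nlinarith
          have key : τ / (2 * ρ) * (t - S t) ≤ 1 / (2 * ρ) * (t - S t) ^ 2 := by
            have h2ρ : (0:ℝ) < 2 * ρ := by linarith
            calc τ / (2 * ρ) * (t - S t) = (τ * (t - S t)) / (2 * ρ) := by ring
              _ ≤ (t - S t) ^ 2 / (2 * ρ) := by gcongr
              _ = 1 / (2 * ρ) * (t - S t) ^ 2 := by ring
          have : m + τ / (2 * ρ) * (S t - τ) + τ / (2 * ρ) * (t - S t)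
              = m + τ / (2 * ρ) * (t - τ) := by ring
          linarith
  -- global lower bound in terms of |t|
  have hbound : ∀ t : ℝ, m + τ / (2 * ρ) * (|t| - τ) ≤ g t := by
    intro t
    have hgabs : g |t| = g t := by
      rcases abs_cases t with ⟨h, _⟩ | ⟨h, _⟩
      · rw [h]
      · rw [h, hgeven]
    obtain ⟨n, hn⟩ := exists_nat_ge (|t| / τ)
    have hle : |t| ≤ n * τ + τ := by
      have := mul_le_mul_of_nonneg_right hn hτpos.le
      rw [div_mul_cancel₀ _ (ne_of_gt hτpos)] at this
      linarith
    have := hmain n |t| (abs_nonneg t) hle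
    rw [hgabs] at this
    exact this
  -- conclude
  have habs : Filter.Tendsto (fun t : ℝ => |t|) (Filter.cocompact ℝ) Filter.atTop := by
    exact tendsto_norm_cocompact_atTop (E := ℝ)
  have hc : 0 < τ / (2 * ρ) := by positivity
  have hf : Filter.Tendsto (fun t : ℝ => m + τ / (2 * ρ) * (|t| - τ))
      (Filter.cocompact ℝ) Filter.atTop := by
    apply Filter.tendsto_atTop_add_const_left
    apply Filter.Tendsto.const_mul_atTop hc
    exact Filter.tendsto_atTop_add_const_right _ _ habs
  exact Filter.tendsto_atTop_mono hbound hf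
end
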